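/- Let F₂ be the free group on generators g and h, and let p ≥ 3. Suppose A = {v₁gᵖv₁', ..., vₙgᵖvₙ'} is a set of reduced words in F₂ such that each vᵢ and vᵢ' is an alternating word in which g or g⁻¹ alternates with nonzero powers of h, with vᵢ ending in a power of h and vᵢ' beginning with a power of h, and the word lengths satisfy L(v_{i+1}) > L(vᵢ) and L(v_{i+1}') > L(vᵢ') for all i. Then any nonempty reduced word w in the elements of A and their inverses (i.e., a product of elements of A∪A⁻¹ with no two consecutive cancelling factors) is not equal to the identity of F₂. In particular, the subgroup of F₂ generated by A is free of rank n with free basis A. -/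

import Mathlib

/-!
Statement 0 (word lemma, Lemma 2.3 of the paper).

`F₂` is the free group on two generators `g = of 0` and `h = of 1`.
An "alternating word in which `g` or `g⁻¹` alternates with nonzero powers of `h`"
is encoded (on the reduced word, via `FreeGroup.toWord`) by the condition that no two
consecutive letters are both `g`-letters; such a word may be empty.
"Ends in a power of `h`" / "begins with a power of `h`" are conditions on the last/first
letter of the reduced word (an empty word is allowed, matching `v₁ = e` in the paper).
The conclusion "every nonempty reduced word in `A ∪ A⁻¹` is ≠ e" and "A is a free basis of
a free subgroup of rank n" are both expressed via the lift `FreeGroup (Fin n) →* F₂`.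
-/

namespace Stmt0

abbrev F2 := FreeGroup (Fin 2)

/-- the generator `g` -/
def g : F2 := FreeGroup.of 0
/-- the generator `h` -/
def h : F2 := FreeGroup.of 1

/-- a reduced word in which `g^{±1}` alternates with (nonzero) powers of `h`:
no two consecutive letters are `g`-letters. -/
def AltGwithHpowers (w : F2) : Prop :=
  List.Chain' (fun a b : Fin 2 × Bool => ¬(a.1 = 0 ∧ b.1 = 0)) w.toWord

/-- `w` ends with a power of `h` (or is empty). -/
def EndsWithH (w : F2) : Prop :=
  w.toWord = [] ∨ w.toWord.getLast?.map Prod.fst = some 1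

/-- `w` begins with a power of `h` (or is empty). -/
def StartsWithH (w : F2) : Prop :=
  w.toWord = [] ∨ w.toWord.head?.map Prod.fst = some 1

/-! ### Auxiliary material -/

open Pointwise

abbrev L2 := Fin 2 × Bool

/-- non-cancelling relation between consecutive letters -/
def RR (a b : L2) : Prop := ¬(a.1 = b.1 ∧ a.2 = !b.2)

abbrev gL : L2 := ((0 : Fin 2), true)
abbrev gL' : L2 := ((0 : Fin 2), false)

lemma reduce_eq_self {l : List L2} (hl : List.IsChain RR l) : FreeGroup.reduce l = l := by
  induction l with
  | nil => rfl
  | cons x l ih =>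
    rw [List.isChain_cons] at hl
    rw [FreeGroup.reduce.cons, ih hl.2]
    cases l with
    | nil => rfl
    | cons hd tl =>
      have hx := hl.1 hd rfl
      simp only [RR] at hx
      show (if x.1 = hd.1 ∧ x.2 = !hd.2 then tl else x :: hd :: tl) = x :: hd :: tl
      rw [if_neg hx]

lemma chain'_reduce (l : List L2) : List.IsChain RR (FreeGroup.reduce l) := by
  induction l with
  | nil => simp
  | cons x l ih =>
    rw [FreeGroup.reduce.cons]
    rcases hr : FreeGroup.reduce l with _ | ⟨hd, tl⟩
    · simp
    · rw [hr] at ih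
      show List.IsChain RR (if x.1 = hd.1 ∧ x.2 = !hd.2 then tl else x :: hd :: tl)
      by_cases hc : x.1 = hd.1 ∧ x.2 = !hd.2
      · rw [if_pos hc]
        simpa using ih.tail
      · rw [if_neg hc]
        exact List.isChain_cons_cons.2 ⟨hc, ih⟩

lemma toWord_chain (x : F2) : List.IsChain RR x.toWord := by
  rw [← FreeGroup.reduce_toWord]; exact chain'_reduce _

lemma toWord_mul_eq {x y : F2} (hxy : List.IsChain RR (x.toWord ++ y.toWord)) :
    (x * y).toWord = x.toWord ++ y.toWord := by
  have h : x * y = FreeGroup.mk (x.toWord ++ y.toWord) := by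
    rw [← FreeGroup.mul_mk, FreeGroup.mk_toWord, FreeGroup.mk_toWord]
  rw [h, FreeGroup.toWord_mk, reduce_eq_self hxy]

lemma hword_mul {u y : F2} (hu : ∀ c ∈ u.toWord.getLast?, c.1 = 1)
    (hy : ∀ c ∈ y.toWord.head?, c.1 = 0) : (u * y).toWord = u.toWord ++ y.toWord := by
  apply toWord_mul_eq
  refine List.IsChain.append (toWord_chain u) (toWord_chain y) ?_
  intro a ha b hb
  have h1 := hu a ha
  have h2 := hy b hb
  simp only [RR]
  rintro ⟨hfst, -⟩
  rw [h1, h2] at hfst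
  exact absurd hfst (by decide)

lemma mk_pow (c : L2) (q : ℕ) :
    (FreeGroup.mk [c]) ^ q = FreeGroup.mk (List.replicate q c) := by
  induction q with
  | zero => simp [FreeGroup.one_eq_mk]
  | succ q ih => rw [pow_succ, ih, FreeGroup.mul_mk, ← List.replicate_succ']

lemma toWord_mk_pow (c : L2) (q : ℕ) :
    ((FreeGroup.mk [c]) ^ q).toWord = List.replicate q c := by
  rw [mk_pow, FreeGroup.toWord_mk, FreeGroup.reduce_replicate]

lemma rep_mul {q : ℕ} {b : Bool} {y : F2}
    (hy : ∀ c ∈ y.toWord.head?, ¬(c.1 = 0 ∧ c.2 = !b)) :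
    ((FreeGroup.mk [((0 : Fin 2), b)]) ^ q * y).toWord
      = List.replicate q ((0 : Fin 2), b) ++ y.toWord := by
  have h1 : ((FreeGroup.mk [((0 : Fin 2), b)]) ^ q).toWord
      = List.replicate q ((0 : Fin 2), b) := toWord_mk_pow _ _
  rw [← h1]
  apply toWord_mul_eq
  rw [h1]
  refine List.IsChain.append (List.isChain_replicate_of_rel _ (by simp [RR])) (toWord_chain y) ?_
  intro a ha c hc
  have ha' : a = ((0 : Fin 2), b) :=
    List.eq_of_mem_replicate (List.mem_of_mem_getLast? ha)
  subst ha'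
  simp only [RR]
  rintro ⟨h1', h2'⟩
  exact hy c hc ⟨h1'.symm, by cases b <;> cases hc2 : c.2 <;> simp_all⟩

lemma gpow_cases (b : Bool) (m : ℕ) (y : F2) :
    (∃ s, ((FreeGroup.mk [((0 : Fin 2), b)]) ^ (m + 3) * y).toWord
        = ((0 : Fin 2), b) :: ((0 : Fin 2), b) :: s)
    ∨ [((0 : Fin 2), !b), ((0 : Fin 2), !b)] <+: y.toWord := by
  set c0 : L2 := ((0 : Fin 2), b) with hc0
  set c1 : L2 := ((0 : Fin 2), !b) with hc1
  have hrep : ∀ k, List.replicate (k + 2) c0 = c0 :: c0 :: List.replicate k c0 := by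
    intro k
    rw [show k + 2 = (k + 1) + 1 by omega, List.replicate_succ, List.replicate_succ]
  by_cases h2 : [c1, c1] <+: y.toWord
  · right; exact h2
  left
  rcases hw : y.toWord with _ | ⟨c, t⟩
  · refine ⟨List.replicate (m + 1) c0 ++ y.toWord, ?_⟩
    rw [rep_mul (by rw [hw]; intro c hc; simp at hc)]
    rw [show m + 3 = (m + 1) + 2 by omega, hrep]
    simp
  · by_cases hc : c = c1
    · subst hc
      have ht : List.IsChain RR t := by
        have hch := toWord_chain y
        rw [hw] at hch
        exact hch.tail
      have hmkt : (FreeGroup.mk t).toWord = t := by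
        rw [FreeGroup.toWord_mk, reduce_eq_self ht]
      have hy2 : y = (FreeGroup.mk [c1]) * FreeGroup.mk t := by
        rw [FreeGroup.mul_mk, show ([c1] ++ t) = c1 :: t from rfl, ← hw,
          FreeGroup.mk_toWord]
      have hinv : (FreeGroup.mk [c1] : F2) = (FreeGroup.mk [c0])⁻¹ := by
        rw [FreeGroup.inv_mk]
        simp [FreeGroup.invRev, hc0, hc1]
      have key : (FreeGroup.mk [c0]) ^ (m + 3) * y
          = (FreeGroup.mk [c0]) ^ (m + 2) * FreeGroup.mk t := by
        rw [hy2, hinv, pow_succ, mul_assoc, mul_inv_cancel_left]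
      have hth : ∀ d ∈ (FreeGroup.mk t).toWord.head?, ¬(d.1 = 0 ∧ d.2 = !b) := by
        rw [hmkt]
        intro d hd
        rintro ⟨hd1, hd2⟩
        have hdc : d = c1 := Prod.ext hd1 hd2
        rcases t with _ | ⟨d0, t2⟩
        · simp at hd
        · have hd0 : d0 = d := by
            have := hd
            rw [Option.mem_def] at this
            simpa using this
          apply h2
          rw [hw]
          refine ⟨t2, ?_⟩
          simp [hd0, hdc]
      rw [key, rep_mul hth, hmkt, hrep]
      exact ⟨List.replicate m c0 ++ t, rfl⟩
    · refine ⟨List.replicate (m + 1) c0 ++ y.toWord, ?_⟩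
      have hyh : ∀ d ∈ y.toWord.head?, ¬(d.1 = 0 ∧ d.2 = !b) := by
        intro d hd
        rw [hw] at hd
        have hdc : d = c := by
          have := hd
          rw [Option.mem_def] at this
          simpa using this.symm
        rintro ⟨hd1, hd2⟩
        exact hc (by rw [← hdc]; exact Prod.ext hd1 hd2)
      rw [rep_mul hyh, show m + 3 = (m + 1) + 2 by omega, hrep]
      simp

/-- rigidity of prefixes of the form `u ++ [c,c]` with `u` alternating and ending in `h` -/
lemma rigid_le {u₁ u₂ : List L2} {c d : L2} {x : List L2}
    (h₂ : List.IsChain (fun a b : Fin 2 × Bool => ¬(a.1 = 0 ∧ b.1 = 0)) u₂)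
    (e₂ : ∀ a ∈ u₂.getLast?, a.1 = 1)
    (hc : c.1 = 0)
    (p₁ : u₁ ++ [c, c] <+: x) (p₂ : u₂ ++ [d, d] <+: x)
    (hle : u₁.length ≤ u₂.length) : u₁ = u₂ ∧ c = d := by
  have hpre : u₁ ++ [c, c] <+: u₂ ++ [d, d] :=
    List.prefix_of_prefix_length_le p₁ p₂ (by simp; omega)
  rcases eq_or_lt_of_le hle with heq | hlt
  · have hfull := hpre.eq_of_length (by simp [heq])
    obtain ⟨h1, h2⟩ := List.append_inj hfull heq
    refine ⟨h1, ?_⟩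
    injection h2 with h3 _
  · exfalso
    set k := u₁.length with hk
    have hb1 : k < (u₁ ++ [c, c]).length := by simp; omega
    have hb2 : k + 1 < (u₁ ++ [c, c]).length := by simp; omega
    have hg1 : (u₁ ++ [c, c])[k]'hb1 = c := by
      rw [List.getElem_append_right (le_refl k)]
      simp [hk]
    have hg2 : (u₁ ++ [c, c])[k + 1]'hb2 = c := by
      rw [List.getElem_append_right (by omega)]
      simp [hk]
    have hy1 : (u₂ ++ [d, d])[k]'(by simp; omega) = c := by
      rw [← hpre.getElem hb1, hg1]
    have hy2 : (u₂ ++ [d, d])[k + 1]'(by simp; omega) = c := by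
      rw [← hpre.getElem hb2, hg2]
    have hu2k : u₂[k]'hlt = c := by
      rw [← List.getElem_append_left (bs := [d, d]) hlt, hy1]
      simp; omega
    rcases lt_or_eq_of_le (Nat.succ_le_of_lt hlt) with hlt2 | heq2
    · have hlt2' : k + 1 < u₂.length := hlt2
      have hu2k1 : u₂[k + 1]'hlt2' = c := by
        rw [← List.getElem_append_left (bs := [d, d]) hlt2', hy2]
        simp; omega
      have := List.isChain_iff_getElem.1 h₂ k (by omega)
      try simp only [List.get_eq_getElem] at this
      rw [hu2k, hu2k1] at this
      exact this ⟨hc, hc⟩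
    · have hlast : u₂.getLast? = some (u₂[k]'hlt) := by
        rw [List.getLast?_eq_getElem?, ← heq2]
        simp [List.getElem?_eq_getElem hlt]
      have := e₂ _ hlast
      rw [hu2k] at this
      rw [hc] at this
      exact absurd this (by decide)

lemma endsH_toWord {w : F2} (hw : EndsWithH w) : ∀ a ∈ w.toWord.getLast?, a.1 = 1 := by
  intro a ha
  rcases hw with hw | hw
  · rw [hw] at ha; simp at ha
  · rw [Option.mem_def] at ha
    rw [ha] at hw
    simpa using hw

lemma startsH_toWord {w : F2} (hw : StartsWithH w) : ∀ a ∈ w.toWord.head?, a.1 = 1 := by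
  intro a ha
  rcases hw with hw | hw
  · rw [hw] at ha; simp at ha
  · rw [Option.mem_def] at ha
    rw [ha] at hw
    simpa using hw

lemma inv_lastH {w : F2} (hw : StartsWithH w) : ∀ a ∈ (w⁻¹).toWord.getLast?, a.1 = 1 := by
  intro a ha
  rw [FreeGroup.toWord_inv, FreeGroup.invRev, List.getLast?_reverse, List.head?_map] at ha
  rw [Option.mem_def, Option.map_eq_some_iff] at ha
  obtain ⟨b, hb, rfl⟩ := ha
  exact startsH_toWord hw b hb

lemma inv_alt {w : F2} (hw : AltGwithHpowers w) :
    List.IsChain (fun a b : Fin 2 × Bool => ¬(a.1 = 0 ∧ b.1 = 0)) (w⁻¹).toWord := by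
  rw [FreeGroup.toWord_inv, FreeGroup.invRev, List.isChain_reverse, List.isChain_map]
  exact hw.imp fun a b hab => by
    simp only [flip]
    rintro ⟨h1, h2⟩
    exact hab ⟨h2, h1⟩

/-- The main ping-pong argument, for at least two indices. -/
theorem mainInj {n : ℕ} [Nontrivial (Fin n)] {p : ℕ} (hp : 3 ≤ p) (v v' : Fin n → F2)
    (halt : ∀ i, AltGwithHpowers (v i)) (halt' : ∀ i, AltGwithHpowers (v' i))
    (hend : ∀ i, EndsWithH (v i)) (hstart : ∀ i, StartsWithH (v' i))
    (hlen : StrictMono fun i => (v i).toWord.length)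
    (hlen' : StrictMono fun i => (v' i).toWord.length) :
    Function.Injective (FreeGroup.lift fun i => v i * g ^ p * v' i) := by
  obtain ⟨m, rfl⟩ : ∃ m, p = m + 3 := ⟨p - 3, by omega⟩
  have hg : g = FreeGroup.mk [gL] := rfl
  have hg' : (g⁻¹ : F2) = FreeGroup.mk [gL'] := by
    rw [hg, FreeGroup.inv_mk]; rfl
  set a : Fin n → F2 := fun i => v i * g ^ (m + 3) * v' i with ha
  let X : Fin n → Set F2 := fun i => {x | (v i).toWord ++ [gL, gL] <+: x.toWord}
  let Y : Fin n → Set F2 := fun i => {x | ((v' i)⁻¹).toWord ++ [gL', gL'] <+: x.toWord}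
  apply FreeGroup.injective_lift_of_ping_pong a X Y
  · -- nonempty
    intro i
    refine ⟨v i * g ^ (m + 3), ?_⟩
    show (v i).toWord ++ [gL, gL] <+: (v i * g ^ (m + 3)).toWord
    have h1 : (g ^ (m + 3)).toWord = List.replicate (m + 3) gL := by
      rw [hg, toWord_mk_pow]
    rw [hword_mul (endsH_toWord (hend i))
      (by rw [h1]; intro c hc;
          have := List.eq_of_mem_replicate (List.mem_of_mem_head? hc); rw [this])]
    rw [h1, show m + 3 = (m + 1) + 1 + 1 by omega, List.replicate_succ, List.replicate_succ]
    exact ⟨List.replicate (m + 1) gL, by simp⟩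
  · -- X disjoint
    intro i j hij
    simp only [Function.onFun]
    rw [Set.disjoint_left]
    intro x hxi hxj
    apply hij
    apply hlen.injective
    rcases le_total (v i).toWord.length (v j).toWord.length with hle | hle
    · have hr := rigid_le (halt j) (endsH_toWord (hend j)) (by rfl) hxi hxj hle
      simpa using congrArg List.length hr.1
    · have hr := rigid_le (halt i) (endsH_toWord (hend i)) (by rfl) hxj hxi hle
      simpa using (congrArg List.length hr.1).symm
  · -- Y disjoint
    intro i j hij
    simp only [Function.onFun]
    rw [Set.disjoint_left]
    intro x hxi hxj
    apply hij
    apply hlen'.injective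
    have hli : ((v' i)⁻¹).toWord.length = (v' i).toWord.length := by
      rw [FreeGroup.toWord_inv, FreeGroup.invRev_length]
    have hlj : ((v' j)⁻¹).toWord.length = (v' j).toWord.length := by
      rw [FreeGroup.toWord_inv, FreeGroup.invRev_length]
    rcases le_total ((v' i)⁻¹).toWord.length ((v' j)⁻¹).toWord.length with hle | hle
    · have hr := rigid_le (inv_alt (halt' j)) (inv_lastH (hstart j)) (by rfl) hxi hxj hle
      have := congrArg List.length hr.1
      rw [hli, hlj] at this
      simpa using this
    · have hr := rigid_le (inv_alt (halt' i)) (inv_lastH (hstart i)) (by rfl) hxj hxi hle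
      have := congrArg List.length hr.1
      rw [hli, hlj] at this
      simpa using this.symm
  · -- X vs Y disjoint
    intro i j
    rw [Set.disjoint_left]
    intro x hxi hyj
    rcases le_total (v i).toWord.length ((v' j)⁻¹).toWord.length with hle | hle
    · have hr := rigid_le (inv_alt (halt' j)) (inv_lastH (hstart j)) (by rfl) hxi hyj hle
      exact absurd hr.2 (by decide)
    · have hr := rigid_le (halt i) (endsH_toWord (hend i)) (by rfl) hyj hxi hle
      exact absurd hr.2 (by decide)
  · -- ping
    intro i z hz
    obtain ⟨x, hx, rfl⟩ := hz
    have hcases := gpow_cases true m (v' i * x)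
    rw [← hg] at hcases
    simp only [Bool.not_true] at hcases
    rcases hcases with ⟨s, hs⟩ | hpre
    · show (v i).toWord ++ [gL, gL] <+: (a i • x).toWord
      have hrw : a i • x = v i * (g ^ (m + 3) * (v' i * x)) := by
        rw [smul_eq_mul, ha]
        simp [mul_assoc]
      rw [hrw, hword_mul (endsH_toWord (hend i))
        (by rw [hs]; intro c hc; rw [Option.mem_def] at hc;
            injection hc with hc; rw [← hc])]
      rw [hs]
      exact ⟨s, by simp⟩
    · exfalso
      apply hx
      obtain ⟨t, ht⟩ := hpre
      show ((v' i)⁻¹).toWord ++ [gL', gL'] <+: x.toWord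
      have hx' : x = (v' i)⁻¹ * (v' i * x) := (inv_mul_cancel_left _ _).symm
      rw [hx', hword_mul (inv_lastH (hstart i))
        (by rw [← ht]; intro c hc; rw [Option.mem_def] at hc;
            injection hc with hc; rw [← hc])]
      rw [← ht]
      exact ⟨t, by simp⟩
  · -- pong
    intro i z hz
    obtain ⟨x, hx, rfl⟩ := hz
    have hcases := gpow_cases false m ((v i)⁻¹ * x)
    rw [← hg'] at hcases
    simp only [Bool.not_false] at hcases
    rcases hcases with ⟨s, hs⟩ | hpre
    · show ((v' i)⁻¹).toWord ++ [gL', gL'] <+: ((a⁻¹) i • x).toWord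
      have hrw : (a⁻¹) i • x = (v' i)⁻¹ * ((g⁻¹) ^ (m + 3) * ((v i)⁻¹ * x)) := by
        rw [smul_eq_mul, Pi.inv_apply, ha]
        simp [mul_assoc, inv_pow]
      rw [hrw, hword_mul (inv_lastH (hstart i))
        (by rw [hs]; intro c hc; rw [Option.mem_def] at hc;
            injection hc with hc; rw [← hc])]
      rw [hs]
      exact ⟨s, by simp⟩
    · exfalso
      apply hx
      obtain ⟨t, ht⟩ := hpre
      show (v i).toWord ++ [gL, gL] <+: x.toWord
      have hx' : x = v i * ((v i)⁻¹ * x) := (mul_inv_cancel_left _ _).symm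
      rw [hx', hword_mul (endsH_toWord (hend i))
        (by rw [← ht]; intro c hc; rw [Option.mem_def] at hc;
            injection hc with hc; rw [← hc])]
      rw [← ht]
      exact ⟨t, by simp⟩

/-! ### An explicit family of alternating words, used to pad small families -/

/-- the word `h g h g ... h` of length `k` (alternating, starting and ending with `h`
when `k` is odd) -/
def pat (k : ℕ) : List L2 :=
  (List.range k).map fun j => ((if j % 2 = 0 then 1 else 0 : Fin 2), true)

lemma pat_length (k : ℕ) : (pat k).length = k := by simp [pat]

lemma pat_chain (k : ℕ) : List.IsChain RR (pat k) := by
  rw [List.isChain_iff_getElem]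
  intro i hi
  simp only [List.get_eq_getElem, pat, List.getElem_map, List.getElem_range, RR]
  rintro ⟨-, habs⟩
  simp at habs

lemma pat_alt (k : ℕ) :
    List.IsChain (fun a b : Fin 2 × Bool => ¬(a.1 = 0 ∧ b.1 = 0)) (pat k) := by
  rw [List.isChain_iff_getElem]
  intro i hi
  simp only [List.get_eq_getElem, pat, List.getElem_map, List.getElem_range]
  by_cases hpar : i % 2 = 0
  · have h1 : ¬((i + 1) % 2 = 0) := by omega
    simp [hpar, h1]
  · have h1 : (i + 1) % 2 = 0 := by omega
    simp [hpar, h1]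

/-- padding word -/
def W (mm : ℕ) : F2 := FreeGroup.mk (pat (2 * mm + 1))

lemma W_toWord (mm : ℕ) : (W mm).toWord = pat (2 * mm + 1) := by
  rw [W, FreeGroup.toWord_mk, reduce_eq_self (pat_chain _)]

lemma W_length (mm : ℕ) : (W mm).toWord.length = 2 * mm + 1 := by
  rw [W_toWord, pat_length]

lemma W_alt (mm : ℕ) : AltGwithHpowers (W mm) := by
  unfold AltGwithHpowers
  rw [W_toWord]
  exact pat_alt _

lemma W_ends (mm : ℕ) : EndsWithH (W mm) := by
  right
  rw [W_toWord, List.getLast?_eq_getElem?, pat_length]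
  have hb : 2 * mm + 1 - 1 < (pat (2 * mm + 1)).length := by rw [pat_length]; omega
  rw [List.getElem?_eq_getElem hb]
  have h0 : (2 * mm + 1 - 1) % 2 = 0 := by omega
  simp [pat, h0]

lemma W_starts (mm : ℕ) : StartsWithH (W mm) := by
  right
  rw [W_toWord]
  have hb : 0 < (pat (2 * mm + 1)).length := by rw [pat_length]; omega
  rcases hp : pat (2 * mm + 1) with _ | ⟨c, t⟩
  · rw [hp] at hb; simp at hb
  · have : c = ((1 : Fin 2), true) := by
      have := congrArg (fun l => l[0]?) hp
      simp [pat] at this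
      simp [this]
    simp [this]

theorem stmt_0 (p : ℕ) (hp : 3 ≤ p) (n : ℕ) (v v' : Fin n → F2)
    (halt : ∀ i, AltGwithHpowers (v i)) (halt' : ∀ i, AltGwithHpowers (v' i))
    (hend : ∀ i, EndsWithH (v i)) (hstart : ∀ i, StartsWithH (v' i))
    (hlen : StrictMono fun i => (v i).toWord.length)
    (hlen' : StrictMono fun i => (v' i).toWord.length) :
    (∀ w : FreeGroup (Fin n), w ≠ 1 →
        FreeGroup.lift (fun i => v i * g ^ p * v' i) w ≠ 1) ∧
      Function.Injective (FreeGroup.lift (fun i => v i * g ^ p * v' i)) := by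
  have hinj : Function.Injective (FreeGroup.lift fun i => v i * g ^ p * v' i) := by
    rcases Nat.eq_zero_or_pos n with rfl | hn
    · intro x y _
      have hall : ∀ w : FreeGroup (Fin 0), w = 1 := by
        intro w
        rw [← FreeGroup.toWord_eq_nil_iff]
        rcases hw : w.toWord with _ | ⟨c, t⟩
        · rfl
        · exact c.1.elim0
      rw [hall x, hall y]
    · classical
      set M := (Finset.univ.sup fun i : Fin n =>
        max (v i).toWord.length (v' i).toWord.length) + 1 with hM
      set vE : Fin (n + 1) → F2 := Fin.lastCases (W M) v with hvE
      set v'E : Fin (n + 1) → F2 := Fin.lastCases (W M) v' with hv'E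
      have hlt : ∀ i : Fin n, (v i).toWord.length < (W M).toWord.length ∧
          (v' i).toWord.length < (W M).toWord.length := by
        intro i
        have h1 : max (v i).toWord.length (v' i).toWord.length < M := by
          rw [hM]
          exact Nat.lt_succ_of_le (Finset.le_sup
            (f := fun i => max (v i).toWord.length (v' i).toWord.length)
            (Finset.mem_univ i))
        have h2 := le_max_left (v i).toWord.length (v' i).toWord.length
        have h3 := le_max_right (v i).toWord.length (v' i).toWord.length
        rw [W_length]
        omega
      haveI : Nontrivial (Fin (n + 1)) :=
        ⟨⟨0, Fin.last n, by simp [Fin.ext_iff, Fin.last]; omega⟩⟩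
      have hE : Function.Injective (FreeGroup.lift fun k => vE k * g ^ p * v'E k) := by
        apply mainInj hp vE v'E
        · intro k
          induction k using Fin.lastCases with
          | last => simpa [hvE] using W_alt M
          | cast i => simpa [hvE] using halt i
        · intro k
          induction k using Fin.lastCases with
          | last => simpa [hv'E] using W_alt M
          | cast i => simpa [hv'E] using halt' i
        · intro k
          induction k using Fin.lastCases with
          | last => simpa [hvE] using W_ends M
          | cast i => simpa [hvE] using hend i
        · intro k
          induction k using Fin.lastCases with
          | last => simpa [hv'E] using W_starts M
          | cast i => simpa [hv'E] using hstart i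
        · intro i j hij
          rcases Fin.eq_castSucc_or_eq_last j with ⟨j', rfl⟩ | rfl
          · rcases Fin.eq_castSucc_or_eq_last i with ⟨i', rfl⟩ | rfl
            · simp only [hvE, Fin.lastCases_castSucc]
              exact hlen (by exact_mod_cast hij)
            · exact absurd (lt_of_lt_of_le hij (Fin.le_last _)) (lt_irrefl _)
          · rcases Fin.eq_castSucc_or_eq_last i with ⟨i', rfl⟩ | rfl
            · simp only [hvE, Fin.lastCases_castSucc, Fin.lastCases_last]
              exact (hlt i').1
            · exact absurd hij (lt_irrefl _)
        · intro i j hij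
          rcases Fin.eq_castSucc_or_eq_last j with ⟨j', rfl⟩ | rfl
          · rcases Fin.eq_castSucc_or_eq_last i with ⟨i', rfl⟩ | rfl
            · simp only [hv'E, Fin.lastCases_castSucc]
              exact hlen' (by exact_mod_cast hij)
            · exact absurd (lt_of_lt_of_le hij (Fin.le_last _)) (lt_irrefl _)
          · rcases Fin.eq_castSucc_or_eq_last i with ⟨i', rfl⟩ | rfl
            · simp only [hv'E, Fin.lastCases_castSucc, Fin.lastCases_last]
              exact (hlt i').2
            · exact absurd hij (lt_irrefl _)
      have hcomp : (FreeGroup.lift fun i => v i * g ^ p * v' i)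
          = (FreeGroup.lift fun k => vE k * g ^ p * v'E k).comp
              (FreeGroup.map Fin.castSucc) := by
        apply FreeGroup.ext_hom
        intro i
        simp [hvE, hv'E]
      rw [hcomp, MonoidHom.coe_comp]
      have hmapinj : Function.Injective
          (FreeGroup.map (Fin.castSucc : Fin n → Fin (n + 1))) := by
        apply Function.LeftInverse.injective
          (g := FreeGroup.map fun k : Fin (n + 1) =>
            if hk : (k : ℕ) < n then (⟨k, hk⟩ : Fin n) else ⟨0, hn⟩)
        intro w
        rw [FreeGroup.map.comp]
        have hfe : ((fun k : Fin (n + 1) =>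
            if hk : (k : ℕ) < n then (⟨k, hk⟩ : Fin n) else ⟨0, hn⟩) ∘ Fin.castSucc)
            = id := by
          funext i
          simp [Fin.castSucc, Fin.castAdd, Fin.castLE, i.isLt]
        rw [hfe, FreeGroup.map.id]
      exact hE.comp hmapinj
  refine ⟨fun w hw hlift => hw ?_, hinj⟩
  exact hinj (by rw [hlift, map_one])

end Stmt0
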